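/- Let ρ be a nontrivial rotation and β a nontrivial boost in the restricted Lorentz group (with respect to a fixed timelike unit vector e₀). Then ρ and β commute if and only if the fixed-point set of ρ equals the Lorentz-orthogonal complement of the fixed-point set of β. -/

import Mathlib

noncomputable section

/-- Minkowski spacetime ℝ^{1+3}. -/
abbrev V4 : Type := Fin 4 → ℝ

/-- The Minkowski metric of signature (+,-,-,-). -/
def mg (x y : V4) : ℝ := x 0 * y 0 - x 1 * y 1 - x 2 * y 2 - x 3 * y 3

/-- The distinguished future-directed timelike unit vector. -/
def e0 : V4 := fun i => if i = 0 then 1 else 0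

/-- A restricted Lorentz transformation: preserves the metric, has determinant 1,
and preserves the time orientation. -/
def IsRestrictedLorentz (T : V4 →ₗ[ℝ] V4) : Prop :=
  (∀ x y, mg (T x) (T y) = mg x y) ∧ LinearMap.det T = 1 ∧ 0 < (T e0) 0

/-- The Euclidean inner product `⟨x,y⟩_e = -g(x,y) + 2 g(x,e) g(y,e)`
determined by a timelike unit vector `e`. -/
def inn (e x y : V4) : ℝ := -mg x y + 2 * mg x e * mg y e

/-- A rotation with respect to `e`: a restricted Lorentz transformation fixing `e`. -/
def IsRotationAt (e : V4) (T : V4 →ₗ[ℝ] V4) : Prop :=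
  IsRestrictedLorentz T ∧ T e = e

/-- A boost with respect to `e`: a restricted Lorentz transformation that is
self-adjoint and positive with respect to `⟨·,·⟩_e`. -/
def IsBoostAt (e : V4) (T : V4 →ₗ[ℝ] V4) : Prop :=
  IsRestrictedLorentz T ∧ (∀ x y, inn e (T x) y = inn e x (T y)) ∧
    (∀ x, x ≠ 0 → 0 < inn e (T x) x)

def dot (x y : V4) : ℝ := ∑ i, x i * y i

lemma dot_expand (x y : V4) : dot x y = x 0 * y 0 + x 1 * y 1 + x 2 * y 2 + x 3 * y 3 := by
  simp [dot, Fin.sum_univ_four]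

lemma dot_comm (x y : V4) : dot x y = dot y x := by
  rw [dot_expand, dot_expand]; ring

lemma mg_comm (x y : V4) : mg x y = mg y x := by simp [mg]; ring

lemma mg_e0 (x : V4) : mg x e0 = x 0 := by simp [mg, e0]

lemma dot_mg (x y : V4) : dot x y = -mg x y + 2 * x 0 * y 0 := by
  simp [dot_expand, mg]; ring

lemma inn_eq_dot (x y : V4) : inn e0 x y = dot x y := by
  rw [inn, mg_e0, mg_e0, dot_mg]

lemma dot_self_nonneg (x : V4) : 0 ≤ dot x x := by
  simp only [dot_expand, ← sq]; positivity

lemma eq_zero_of_dot_self (x : V4) (h : dot x x = 0) : x = 0 := by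
  have h2 : x 0 ^ 2 + x 1 ^2 + x 2 ^2 + x 3^2 = 0 := by rw [dot_expand] at h; nlinarith
  have q0 : x 0 = 0 := by nlinarith [sq_nonneg (x 0), sq_nonneg (x 1), sq_nonneg (x 2), sq_nonneg (x 3)]
  have q1 : x 1 = 0 := by nlinarith [sq_nonneg (x 0), sq_nonneg (x 1), sq_nonneg (x 2), sq_nonneg (x 3)]
  have q2 : x 2 = 0 := by nlinarith [sq_nonneg (x 0), sq_nonneg (x 1), sq_nonneg (x 2), sq_nonneg (x 3)]
  have q3 : x 3 = 0 := by nlinarith [sq_nonneg (x 0), sq_nonneg (x 1), sq_nonneg (x 2), sq_nonneg (x 3)]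
  funext i; fin_cases i
  · exact q0
  · exact q1
  · exact q2
  · exact q3

def eta : V4 →ₗ[ℝ] V4 where
  toFun x := fun i => if i = 0 then x 0 else -x i
  map_add' x y := by funext i; by_cases h : i = 0 <;> simp [h] <;> ring
  map_smul' c x := by funext i; by_cases h : i = 0 <;> simp [h]

@[simp] lemma eta_apply_zero (x : V4) : eta x 0 = x 0 := by simp [eta]
lemma eta_apply (x : V4) (i : Fin 4) (hi : i ≠ 0) : eta x i = -x i := by simp [eta, hi]

lemma eta_eta (x : V4) : eta (eta x) = x := by
  funext i; by_cases h : i = 0 <;> simp [eta, h]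

lemma mg_eq_dot_eta (x y : V4) : mg x y = dot x (eta y) := by
  have h1 : eta y 1 = - y 1 := eta_apply y 1 (by decide)
  have h2 : eta y 2 = - y 2 := eta_apply y 2 (by decide)
  have h3 : eta y 3 = - y 3 := eta_apply y 3 (by decide)
  simp [dot_expand, mg, h1, h2, h3]; ring

lemma dot_eta_comm (x y : V4) : dot (eta x) y = dot x (eta y) := by
  have h1 : eta y 1 = - y 1 := eta_apply y 1 (by decide)
  have h2 : eta y 2 = - y 2 := eta_apply y 2 (by decide)
  have h3 : eta y 3 = - y 3 := eta_apply y 3 (by decide)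
  have g1 : eta x 1 = - x 1 := eta_apply x 1 (by decide)
  have g2 : eta x 2 = - x 2 := eta_apply x 2 (by decide)
  have g3 : eta x 3 = - x 3 := eta_apply x 3 (by decide)
  simp [dot_expand, h1, h2, h3, g1, g2, g3]

lemma eta_e0 : eta e0 = e0 := by
  funext i; by_cases h : i = 0 <;> simp [eta, e0, h]

lemma eta_eq (x : V4) : eta x = (2 * x 0) • e0 - x := by
  funext i; by_cases h : i = 0 <;> simp [eta, e0, h] <;> ring

-- nondegeneracy
lemma dot_cancel (a b : V4) (h : ∀ y, dot a y = dot b y) : a = b := by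
  have := h (a - b)
  have h2 : dot (a - b) (a - b) = 0 := by
    simp only [dot_expand, Pi.sub_apply] at this ⊢; ring_nf; ring_nf at this; linarith
  have := eq_zero_of_dot_self _ h2
  funext i; have := congrFun this i; simpa [sub_eq_zero] using this

-- two null lemma
lemma two_null (a b : V4) (ha : mg a a = 0) (hb : mg b b = 0) (hab : mg a b = 0)
    (ha0 : a 0 ≠ 0) : b = (b 0 / a 0) • a := by
  set c := b 0 / a 0 with hc
  set d : V4 := b - c • a with hd
  have hd0 : d 0 = 0 := by rw [hd, Pi.sub_apply, Pi.smul_apply, smul_eq_mul, hc, div_mul_cancel₀ _ ha0, sub_self]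
  have hmgd : mg d d = 0 := by
    simp only [mg, hd, Pi.sub_apply, Pi.smul_apply, smul_eq_mul]
    simp only [mg] at ha hb hab
    linear_combination hb - 2*c*hab + c^2*ha
  have hdot : dot d d = 0 := by rw [dot_mg, hmgd, hd0]; ring
  have := eq_zero_of_dot_self _ hdot
  rw [hd, sub_eq_zero] at this; exact this

lemma null_time_ne (u : V4) (hu : mg u u = 0) (hne : u ≠ 0) : u 0 ≠ 0 := by
  intro h0
  apply hne
  apply eq_zero_of_dot_self
  rw [dot_mg, hu, h0]; ring

-- bilinearity lemmas
lemma dot_smul_left (c : ℝ) (x y : V4) : dot (c • x) y = c * dot x y := by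
  simp only [dot_expand, Pi.smul_apply, smul_eq_mul]; ring
lemma dot_smul_right (c : ℝ) (x y : V4) : dot x (c • y) = c * dot x y := by
  simp only [dot_expand, Pi.smul_apply, smul_eq_mul]; ring
lemma dot_add_left (x y z : V4) : dot (x + y) z = dot x z + dot y z := by
  simp only [dot_expand, Pi.add_apply]; ring
lemma dot_add_right (x y z : V4) : dot x (y + z) = dot x y + dot x z := by
  simp only [dot_expand, Pi.add_apply]; ring
lemma dot_sub_left (x y z : V4) : dot (x - y) z = dot x z - dot y z := by
  simp only [dot_expand, Pi.sub_apply]; ring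
lemma dot_sub_right (x y z : V4) : dot x (y - z) = dot x y - dot x z := by
  simp only [dot_expand, Pi.sub_apply]; ring
lemma mg_smul_left (c : ℝ) (x y : V4) : mg (c • x) y = c * mg x y := by
  simp only [mg, Pi.smul_apply, smul_eq_mul]; ring
lemma mg_smul_right (c : ℝ) (x y : V4) : mg x (c • y) = c * mg x y := by
  simp only [mg, Pi.smul_apply, smul_eq_mul]; ring
lemma mg_add_left (x y z : V4) : mg (x + y) z = mg x z + mg y z := by
  simp only [mg, Pi.add_apply]; ring
lemma mg_add_right (x y z : V4) : mg x (y + z) = mg x y + mg x z := by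
  simp only [mg, Pi.add_apply]; ring
lemma dot_e0 (x : V4) : dot x e0 = x 0 := by
  rw [dot_mg, mg_e0]; simp [e0]; ring
lemma u_eta_e0 (u : V4) : u + eta u = (2 * u 0) • e0 := by
  funext i
  by_cases h : i = 0
  · subst h; simp [eta, e0]; ring
  · simp [eta, e0, h, eta_apply u i h]

-- Euclidean space bridge
def Eu : Type := EuclideanSpace ℝ (Fin 4)
instance : NormedAddCommGroup Eu := inferInstanceAs (NormedAddCommGroup (EuclideanSpace ℝ (Fin 4)))
instance : InnerProductSpace ℝ Eu := inferInstanceAs (InnerProductSpace ℝ (EuclideanSpace ℝ (Fin 4)))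
instance : FiniteDimensional ℝ Eu := inferInstanceAs (FiniteDimensional ℝ (EuclideanSpace ℝ (Fin 4)))

def toE : V4 ≃ₗ[ℝ] Eu := (WithLp.linearEquiv 2 ℝ V4).symm

lemma finrank_Eu : Module.finrank ℝ Eu = 4 := by
  have : Module.finrank ℝ (EuclideanSpace ℝ (Fin 4)) = 4 := finrank_euclideanSpace_fin
  exact this

lemma inner_toE (x y : V4) : @inner ℝ Eu _ (toE x) (toE y) = dot x y := by
  have h : @inner ℝ Eu _ (toE x) (toE y)
      = @inner ℝ (EuclideanSpace ℝ (Fin 4)) _ (toE x) (toE y) := rfl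
  rw [h]; erw [PiLp.inner_apply]
  simp only [RCLike.inner_apply, starRingEnd_apply, star_trivial]
  exact Finset.sum_congr rfl (fun i _ => mul_comm _ _)

lemma inner_eq_dot' (x y : Eu) : @inner ℝ Eu _ x y = dot (toE.symm x) (toE.symm y) := by
  rw [← inner_toE]; rw [toE.apply_symm_apply, toE.apply_symm_apply]

-- boost structure lemma
lemma boost_structure (β : V4 →ₗ[ℝ] V4) (hβ : IsBoostAt e0 β) (hβ1 : β ≠ LinearMap.id) :
    ∃ (u : V4) (lam : ℝ), 0 < lam ∧ lam ≠ 1 ∧ dot u u = 1 ∧ mg u u = 0 ∧ u 0 ≠ 0 ∧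
      β u = lam • u ∧ β (eta u) = lam⁻¹ • eta u ∧
      (∀ x, β x = lam • x → x = (dot u x) • u) ∧
      (∀ q, dot u q = 0 → dot (eta u) q = 0 → β q = q) := by
  classical
  obtain ⟨⟨hβL, hβdet, hβt⟩, hβsym', hβpos'⟩ := hβ
  have hβdot : ∀ x y, dot (β x) y = dot x (β y) := by
    intro x y; rw [← inn_eq_dot, ← inn_eq_dot]; exact hβsym' x y
  have hβpos : ∀ x, x ≠ 0 → 0 < dot (β x) x := by
    intro x hx; rw [← inn_eq_dot]; exact hβpos' x hx
  -- β ∘ eta ∘ β = eta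
  have hβηβ : ∀ x, β (eta (β x)) = eta x := by
    intro x
    apply dot_cancel
    intro y
    calc dot (β (eta (β x))) y = dot (eta (β x)) (β y) := hβdot _ _
      _ = mg (β x) (β y) := by rw [dot_eta_comm, ← mg_eq_dot_eta]
      _ = mg x y := hβL x y
      _ = dot (eta x) y := by rw [mg_eq_dot_eta, ← dot_eta_comm]
  -- spectral theorem setup
  set Tβ : Eu →ₗ[ℝ] Eu := toE.toLinearMap ∘ₗ β ∘ₗ toE.symm.toLinearMap with hTβ
  have hTβ_apply : ∀ x : Eu, Tβ x = toE (β (toE.symm x)) := fun x => rfl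
  have hsym : Tβ.IsSymmetric := by
    intro x y
    rw [hTβ_apply, hTβ_apply, inner_eq_dot', inner_eq_dot', toE.symm_apply_apply,
      toE.symm_apply_apply]
    exact hβdot _ _
  set b := hsym.eigenvectorBasis finrank_Eu with hb
  set μ := hsym.eigenvalues finrank_Eu with hμ
  have happly : ∀ i, Tβ (b i) = μ i • b i := fun i => hsym.apply_eigenvectorBasis finrank_Eu i
  set ub : Fin 4 → V4 := fun i => toE.symm (b i) with hub
  have htoub : ∀ i, toE (ub i) = b i := fun i => toE.apply_symm_apply (b i)
  have hβub : ∀ i, β (ub i) = μ i • ub i := by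
    intro i
    have := congrArg toE.symm (happly i)
    rw [hTβ_apply, toE.symm_apply_apply, map_smul] at this
    exact this
  have hub_dot : ∀ i j, dot (ub i) (ub j) = if i = j then 1 else 0 := by
    intro i j
    rw [← inner_toE, htoub, htoub]
    exact orthonormal_iff_ite.mp b.orthonormal i j
  have hub_unit : ∀ i, dot (ub i) (ub i) = 1 := by intro i; rw [hub_dot]; simp
  have hub_ne : ∀ i, ub i ≠ 0 := by
    intro i h
    have := hub_unit i
    rw [h] at this
    simp [dot] at this
  have hμpos : ∀ i, 0 < μ i := by
    intro i
    have h1 := hβpos (ub i) (hub_ne i)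
    rw [hβub i, dot_smul_left, hub_unit i, mul_one] at h1
    exact h1
  -- expansion
  have hexpand : ∀ x : V4, ∑ i, (dot (ub i) x) • ub i = x := by
    intro x
    have h1 := b.sum_repr (toE x)
    have h2 : ∀ i, b.repr (toE x) i = dot (ub i) x := by
      intro i
      rw [b.repr_apply_apply, ← htoub i, inner_toE]
    have := congrArg toE.symm h1
    rw [map_sum] at this
    rw [toE.symm_apply_apply] at this
    calc ∑ i, (dot (ub i) x) • ub i = ∑ i, toE.symm (b.repr (toE x) i • b i) := by
          apply Finset.sum_congr rfl
          intro i _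
          rw [map_smul, h2 i]
      _ = x := this
  -- exists eigenvalue ≠ 1
  have hex : ∃ i, μ i ≠ 1 := by
    by_contra h
    push_neg at h
    apply hβ1
    apply LinearMap.ext
    intro x
    have hx : β x = x := by
      conv_lhs => rw [← hexpand x]
      rw [map_sum]
      conv_rhs => rw [← hexpand x]
      apply Finset.sum_congr rfl
      intro i _
      rw [map_smul, hβub i, h i, one_smul]
    simpa using hx
  obtain ⟨i₀, hi₀⟩ := hex
  set lam := μ i₀ with hlam
  set u : V4 := ub i₀ with hu
  have hlam_pos : 0 < lam := hμpos i₀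
  have hβu : β u = lam • u := hβub i₀
  have hu_unit : dot u u = 1 := hub_unit i₀
  -- nullity of eigenvectors with eigenvalue ≠ 1
  have hnull : ∀ i, μ i ≠ 1 → mg (ub i) (ub i) = 0 := by
    intro i hi
    have h1 : mg (β (ub i)) (β (ub i)) = mg (ub i) (ub i) := hβL _ _
    rw [hβub i, mg_smul_left, mg_smul_right] at h1
    have hμ2 : μ i * μ i ≠ 1 := by
      intro hc
      have h3 := hμpos i
      rcases lt_or_gt_of_ne hi with h | h
      · nlinarith
      · nlinarith
    have : (μ i * μ i - 1) * mg (ub i) (ub i) = 0 := by linarith [h1]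
    rcases mul_eq_zero.mp this with h | h
    · exact absurd (by linarith : μ i * μ i = 1) hμ2
    · exact h
  have hu_null : mg u u = 0 := hnull i₀ hi₀
  have hu0 : u 0 ≠ 0 := null_time_ne u hu_null (hub_ne i₀)
  -- eta u is eigenvector for lam⁻¹
  have hβηu : β (eta u) = lam⁻¹ • eta u := by
    have h1 := hβηβ u
    rw [hβu, map_smul, map_smul] at h1
    have h2 : lam • β (eta u) = eta u := h1
    calc β (eta u) = lam⁻¹ • (lam • β (eta u)) := by
          rw [smul_smul, inv_mul_cancel₀ (ne_of_gt hlam_pos), one_smul]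
      _ = lam⁻¹ • eta u := by rw [h2]
  have heta_u_null : mg (eta u) (eta u) = 0 := by
    rw [mg_eq_dot_eta, eta_eta, dot_comm, ← mg_eq_dot_eta, hu_null]
  have heta_u0 : (eta u) 0 ≠ 0 := by rw [eta_apply_zero]; exact hu0
  have hlam_inv_ne : lam⁻¹ ≠ lam := by
    intro h
    have h2 : lam * lam = 1 := by
      have := congrArg (· * lam) h
      simpa [inv_mul_cancel₀ (ne_of_gt hlam_pos)] using this.symm
    rcases lt_or_gt_of_ne hi₀ with hl | hl <;> nlinarith
  have hlam_inv_ne1 : lam⁻¹ ≠ 1 := by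
    intro h
    apply hi₀
    have := congrArg (fun t => t⁻¹) h
    simpa using this
  -- eigenvectors with different eigenvalues are orthogonal
  have eigen_orth : ∀ (x y : V4) (m₁ m₂ : ℝ), β x = m₁ • x → β y = m₂ • y → m₁ ≠ m₂ →
      dot x y = 0 := by
    intro x y m₁ m₂ hx hy hne
    have h1 : m₁ * dot x y = m₂ * dot x y := by
      rw [← dot_smul_left, ← hx, hβdot, hy, dot_smul_right]
    by_contra h
    exact hne (mul_right_cancel₀ h h1)
  -- uniqueness of the lam-eigenindex
  have hUNIQI : ∀ i, μ i = lam → i = i₀ := by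
    intro i hilam
    by_contra hne
    have hi : μ i ≠ 1 := by rw [hilam]; exact hi₀
    have hdotu : dot (ub i) u = 0 := by
      have := hub_dot i i₀
      rw [if_neg hne] at this
      exact this
    have hdotηu : dot (ub i) (eta u) = 0 := by
      apply eigen_orth _ _ (μ i) lam⁻¹ (hβub i) hβηu
      rw [hilam]; exact hlam_inv_ne.symm
    have hmgu : mg (ub i) u = 0 := by rw [mg_eq_dot_eta]; exact hdotηu
    have h2 := two_null u (ub i) hu_null (hnull i hi) (by rw [mg_comm]; exact hmgu) hu0
    rw [h2, dot_smul_left, hu_unit, mul_one] at hdotu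
    rw [hdotu, zero_smul] at h2
    exact hub_ne i h2
  -- classification
  have hCLASS : ∀ i, μ i ≠ 1 → (i = i₀ ∨ ∃ c : ℝ, ub i = c • eta u) := by
    intro i hi
    by_cases hilam : μ i = lam
    · exact Or.inl (hUNIQI i hilam)
    · right
      have hdotu : dot (ub i) u = 0 :=
        eigen_orth _ _ (μ i) lam (hβub i) hβu hilam
      by_cases hilaminv : μ i = lam⁻¹
      · have hmgηu : mg (ub i) (eta u) = 0 := by
          rw [mg_eq_dot_eta, eta_eta]; exact hdotu
        have h2 := two_null (eta u) (ub i) heta_u_null (hnull i hi)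
          (by rw [mg_comm]; exact hmgηu) heta_u0
        exact ⟨_, h2⟩
      · exfalso
        have hdotηu : dot (ub i) (eta u) = 0 :=
          eigen_orth _ _ (μ i) lam⁻¹ (hβub i) hβηu hilaminv
        have hmgu : mg (ub i) u = 0 := by rw [mg_eq_dot_eta]; exact hdotηu
        have h2 := two_null u (ub i) hu_null (hnull i hi) (by rw [mg_comm]; exact hmgu) hu0
        rw [h2, dot_smul_left, hu_unit, mul_one] at hdotu
        rw [hdotu, zero_smul] at h2
        exact hub_ne i h2
  -- UNIQ : lam-eigenspace is spanned by u
  have hUNIQ : ∀ x, β x = lam • x → x = (dot u x) • u := by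
    intro x hx
    have hco : ∀ i, i ≠ i₀ → dot (ub i) x = 0 := by
      intro i hne
      have hilam : μ i ≠ lam := fun hc => hne (hUNIQI i hc)
      have h1 : μ i * dot (ub i) x = lam * dot (ub i) x := by
        rw [← dot_smul_left, ← hβub i, hβdot, hx, dot_smul_right]
      by_contra hc
      exact hilam (mul_right_cancel₀ hc h1)
    calc x = ∑ i, (dot (ub i) x) • ub i := (hexpand x).symm
      _ = (dot (ub i₀) x) • ub i₀ := by
          apply Finset.sum_eq_single_of_mem i₀ (Finset.mem_univ i₀)
          intro i _ hne
          rw [hco i hne, zero_smul]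
      _ = (dot u x) • u := rfl
  -- KER : vectors orthogonal to u and eta u are fixed
  have hKER : ∀ q, dot u q = 0 → dot (eta u) q = 0 → β q = q := by
    intro q h1 h2
    conv_lhs => rw [← hexpand q]
    rw [map_sum]
    conv_rhs => rw [← hexpand q]
    apply Finset.sum_congr rfl
    intro i _
    rw [map_smul, hβub i]
    by_cases hi : μ i = 1
    · rw [hi, one_smul]
    · rcases hCLASS i hi with h | ⟨c, hc⟩
      · have hz : dot (ub i) q = 0 := by rw [h]; exact h1
        rw [hz, zero_smul, zero_smul]
      · have hz : dot (ub i) q = 0 := by rw [hc, dot_smul_left, h2, mul_zero]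
        rw [hz, zero_smul, zero_smul]
  exact ⟨u, lam, hlam_pos, hi₀, hu_unit, hu_null, hu0, hβu, hβηu, hUNIQ, hKER⟩
lemma fix_threeE (T : Eu →ₗ[ℝ] Eu) (hdet : LinearMap.det T = 1)
    (hdot : ∀ x y : Eu, @inner ℝ Eu _ (T x) (T y) = @inner ℝ Eu _ x y)
    (f : Fin 3 → Eu) (horth : Orthonormal ℝ f)
    (hfix : ∀ i, T (f i) = f i) : T = LinearMap.id := by
  classical
  set W : Submodule ℝ Eu := Submodule.span ℝ (Set.range f) with hW
  have hWrank : Module.finrank ℝ W = 3 := by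
    rw [finrank_span_eq_card horth.linearIndependent]; simp
  have hKrank : Module.finrank ℝ Wᗮ = 1 := by
    have := Submodule.finrank_add_finrank_orthogonal W
    rw [finrank_Eu, hWrank] at this; omega
  set bK := stdOrthonormalBasis ℝ (↥Wᗮ) with hbK
  set z₀ : ↥Wᗮ := bK ⟨0, by rw [hKrank]; norm_num⟩ with hz₀
  set z : Eu := (z₀ : Eu) with hz
  have hz_mem : z ∈ Wᗮ := z₀.2
  have hz_inner : @inner ℝ Eu _ z z = 1 := by
    have h1 : ‖z₀‖ = 1 := bK.orthonormal.1 _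
    have h2 : ‖z‖ = 1 := by rw [hz]; exact h1
    rw [real_inner_self_eq_norm_sq, h2]; norm_num
  have hfz : ∀ i, @inner ℝ Eu _ (f i) z = 0 :=
    fun i => (Submodule.mem_orthogonal W z).1 hz_mem _ (Submodule.subset_span ⟨i, rfl⟩)
  have hTz_mem : T z ∈ Wᗮ := by
    rw [Submodule.mem_orthogonal]
    intro u hu
    induction hu using Submodule.span_induction with
    | mem v hv =>
        obtain ⟨i, rfl⟩ := hv
        rw [← hfix i, hdot]
        exact hfz i
    | zero => simp
    | add a b _ _ ha hb => rw [inner_add_left, ha, hb]; ring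
    | smul r a _ ha => rw [real_inner_smul_left, ha]; ring
  set m : ↥Wᗮ := ⟨T z, hTz_mem⟩ with hm
  set c : ℝ := bK.repr m ⟨0, by rw [hKrank]; norm_num⟩ with hc
  have hTz : T z = c • z := by
    have hs := bK.sum_repr m
    have hone : (Finset.univ : Finset (Fin (Module.finrank ℝ ↥Wᗮ)))
        = {⟨0, by rw [hKrank]; norm_num⟩} := by
      apply Finset.eq_singleton_iff_unique_mem.2
      refine ⟨Finset.mem_univ _, fun b _ => ?_⟩
      apply Fin.ext
      have := b.2
      omega
    rw [hone, Finset.sum_singleton] at hs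
    have := congrArg (Subtype.val) hs
    simpa [hm, hz] using this.symm
  have hcc : c * c = 1 := by
    have h1 : @inner ℝ Eu _ (T z) (T z) = 1 := by rw [hdot]; exact hz_inner
    rw [hTz, real_inner_smul_left, real_inner_smul_right, hz_inner] at h1
    linarith [h1]
  set g : Fin 4 → Eu := ![f 0, f 1, f 2, z] with hg
  have hgorth : Orthonormal ℝ g := by
    rw [orthonormal_iff_ite]
    have hf := orthonormal_iff_ite.mp horth
    intro i j
    fin_cases i <;> fin_cases j <;>
      simp only [hg, Matrix.cons_val_zero, Matrix.cons_val_one, Matrix.head_cons,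
        Matrix.cons_val_two, Matrix.tail_cons, Matrix.cons_val_three] <;>
      first
        | simpa using hf 0 0 | simpa using hf 0 1 | simpa using hf 0 2
        | simpa using hf 1 0 | simpa using hf 1 1 | simpa using hf 1 2
        | simpa using hf 2 0 | simpa using hf 2 1 | simpa using hf 2 2
        | simpa using hfz 0 | simpa using hfz 1 | simpa using hfz 2
        | (rw [real_inner_comm]; simpa using hfz 0)
        | (rw [real_inner_comm]; simpa using hfz 1)
        | (rw [real_inner_comm]; simpa using hfz 2)
        | simpa using hz_inner
  have hcard : Fintype.card (Fin 4) = Module.finrank ℝ Eu := by rw [finrank_Eu]; simp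
  set bB : Module.Basis (Fin 4) ℝ Eu :=
    basisOfLinearIndependentOfCardEqFinrank hgorth.linearIndependent hcard with hbBdef
  have hbB_coe : ⇑bB = g := coe_basisOfLinearIndependentOfCardEqFinrank _ _
  set d : Fin 4 → ℝ := ![1, 1, 1, c] with hd
  have hcol : ∀ j, T (bB j) = d j • bB j := by
    intro j
    fin_cases j
    · show T (bB 0) = d 0 • bB 0
      rw [hbB_coe]
      show T (g 0) = (1:ℝ) • g 0
      rw [one_smul]; exact hfix 0
    · show T (bB 1) = d 1 • bB 1
      rw [hbB_coe]
      show T (g 1) = (1:ℝ) • g 1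
      rw [one_smul]; exact hfix 1
    · show T (bB 2) = d 2 • bB 2
      rw [hbB_coe]
      show T (g 2) = (1:ℝ) • g 2
      rw [one_smul]; exact hfix 2
    · show T (bB 3) = d 3 • bB 3
      rw [hbB_coe]
      show T z = c • z
      exact hTz
  have hmat : LinearMap.toMatrix bB bB T = Matrix.diagonal d := by
    ext i j
    rw [LinearMap.toMatrix_apply, hcol j, map_smul, bB.repr_self, Matrix.diagonal_apply]
    by_cases h : i = j
    · subst h; simp
    · simp [h, Finsupp.single_apply, Ne.symm h]
  have hdet2 : LinearMap.det T = c := by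
    rw [← LinearMap.det_toMatrix bB, hmat, Matrix.det_diagonal]
    simp [hd, Fin.prod_univ_four]
  have hc1 : c = 1 := by rw [← hdet2]; exact hdet.symm ▸ rfl
  apply bB.ext
  intro i
  have := hcol i
  rw [this]
  rw [hbB_coe]
  fin_cases i
  · show d 0 • g 0 = LinearMap.id (g 0); simp [hd]
  · show d 1 • g 1 = LinearMap.id (g 1); simp [hd]
  · show d 2 • g 2 = LinearMap.id (g 2); simp [hd]
  · show d 3 • g 3 = LinearMap.id (g 3); simp [hd, hc1]

-- rotation lemmas
lemma rot_coord (ρ : V4 →ₗ[ℝ] V4) (hρL : ∀ x y, mg (ρ x) (ρ y) = mg x y)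
    (hρe0 : ρ e0 = e0) : ∀ x, (ρ x) 0 = x 0 := by
  intro x
  rw [← mg_e0 (ρ x), ← mg_e0 x]
  conv_lhs => rw [← hρe0]
  exact hρL x e0

lemma rot_dot (ρ : V4 →ₗ[ℝ] V4) (hρL : ∀ x y, mg (ρ x) (ρ y) = mg x y)
    (hρe0 : ρ e0 = e0) : ∀ x y, dot (ρ x) (ρ y) = dot x y := by
  intro x y
  rw [dot_mg, dot_mg, hρL, rot_coord ρ hρL hρe0, rot_coord ρ hρL hρe0]

lemma rot_eta (ρ : V4 →ₗ[ℝ] V4) (hρL : ∀ x y, mg (ρ x) (ρ y) = mg x y)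
    (hρe0 : ρ e0 = e0) : ∀ x, ρ (eta x) = eta (ρ x) := by
  intro x
  rw [eta_eq, eta_eq, map_sub, map_smul, hρe0, rot_coord ρ hρL hρe0]


/-- A nontrivial rotation `ρ` and a nontrivial boost `β` (with respect to `e₀`)
commute if and only if the fixed-point set of `ρ` equals the Lorentz-orthogonal
complement of the fixed-point set of `β`. -/
theorem rotation_boost_commute_iff
    (ρ β : V4 →ₗ[ℝ] V4) (hρ : IsRotationAt e0 ρ) (hρ1 : ρ ≠ LinearMap.id)
    (hβ : IsBoostAt e0 β) (hβ1 : β ≠ LinearMap.id) :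
    ρ ∘ₗ β = β ∘ₗ ρ ↔
      {x : V4 | ρ x = x} = {x : V4 | ∀ y, β y = y → mg x y = 0} := by
  obtain ⟨⟨hρL, hρdet, hρt⟩, hρe0⟩ := hρ
  have hρdot : ∀ x y, dot (ρ x) (ρ y) = dot x y := rot_dot ρ hρL hρe0
  have hρeta : ∀ x, ρ (eta x) = eta (ρ x) := rot_eta ρ hρL hρe0
  have hβdot : ∀ x y, dot (β x) y = dot x (β y) := by
    intro x y; rw [← inn_eq_dot, ← inn_eq_dot]; exact hβ.2.1 x y
  obtain ⟨u, lam, hlam_pos, hlam1, hu_unit, hu_null, hu0, hβu, hβηu, hUNIQ, hKER⟩ :=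
    boost_structure β hβ hβ1
  have hlam_inv1 : lam⁻¹ ≠ 1 := fun h => hlam1 (inv_eq_one.mp h)
  have hηuηu : dot (eta u) (eta u) = 1 := by rw [dot_eta_comm, eta_eta, hu_unit]
  have huηu : dot u (eta u) = 0 := by rw [← mg_eq_dot_eta]; exact hu_null
  have hηuu : dot (eta u) u = 0 := by rw [dot_comm]; exact huηu
  have he0span : u + eta u = (2 * u 0) • e0 := u_eta_e0 u
  -- vectors fixed by β are orthogonal to u and eta u
  have hfix_orth : ∀ y, β y = y → dot u y = 0 ∧ dot (eta u) y = 0 := by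
    intro y hy
    constructor
    · have h1 : lam * dot u y = 1 * dot u y := by
        rw [← dot_smul_left, ← hβu, hβdot, hy, one_mul]
      by_contra hc
      exact hlam1 (mul_right_cancel₀ hc h1)
    · have h1 : lam⁻¹ * dot (eta u) y = 1 * dot (eta u) y := by
        rw [← dot_smul_left, ← hβηu, hβdot, hy, one_mul]
      by_contra hc
      exact hlam_inv1 (mul_right_cancel₀ hc h1)
  -- orthogonality of the residue
  have hq_orth : ∀ x : V4,
      dot u (x - (dot u x) • u - (dot (eta u) x) • eta u) = 0 ∧
      dot (eta u) (x - (dot u x) • u - (dot (eta u) x) • eta u) = 0 := by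
    intro x
    constructor
    · rw [dot_sub_right, dot_sub_right, dot_smul_right, dot_smul_right, hu_unit, huηu]; ring
    · rw [dot_sub_right, dot_sub_right, dot_smul_right, dot_smul_right, hηuu, hηuηu]; ring
  have hxq : ∀ x : V4, x = (dot u x) • u + (dot (eta u) x) • eta u
      + (x - (dot u x) • u - (dot (eta u) x) • eta u) := by
    intro x; abel
  -- membership in the Minkowski-orthocomplement set implies the span form
  have hTsub : ∀ x, (∀ y, β y = y → mg x y = 0) →
      x = (dot u x) • u + (dot (eta u) x) • eta u := by
    intro x hx
    set q : V4 := x - (dot u x) • u - (dot (eta u) x) • eta u with hqdef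
    obtain ⟨hqu, hqηu⟩ := hq_orth x
    have hβq : β q = q := hKER q hqu hqηu
    have hq0 : q 0 = 0 := by
      have h2 : dot q ((2 * u 0) • e0) = 0 := by
        rw [← he0span, dot_add_right, dot_comm q u, dot_comm q (eta u), hqu, hqηu]; ring
      rw [dot_smul_right, dot_e0] at h2
      rcases mul_eq_zero.mp h2 with h | h
      · exact absurd h (by intro hc; apply hu0; linarith)
      · exact h
    have hmgq : mg x q = 0 := hx q hβq
    have hmgqq : mg q q = 0 := by
      conv_lhs at hmgq => rw [hxq x]
      rw [mg_add_left, mg_add_left, mg_smul_left, mg_smul_left] at hmgq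
      have h1 : mg u q = 0 := by rw [mg_eq_dot_eta, ← dot_eta_comm]; exact hqηu
      have h2 : mg (eta u) q = 0 := by rw [mg_eq_dot_eta, ← dot_eta_comm, eta_eta]; exact hqu
      rw [h1, h2] at hmgq
      linarith [hmgq]
    have hdotq : dot q q = 0 := by rw [dot_mg, hmgqq, hq0]; ring
    have hq_zero : q = 0 := eq_zero_of_dot_self q hdotq
    rw [hqdef, sub_sub, sub_eq_zero] at hq_zero
    exact hq_zero
  -- the span form implies membership
  have hSsub : ∀ (a bb : ℝ) (y : V4), β y = y → mg (a • u + bb • eta u) y = 0 := by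
    intro a bb y hy
    obtain ⟨h1, h2⟩ := hfix_orth y hy
    have hg1 : mg u y = 0 := by rw [mg_eq_dot_eta, ← dot_eta_comm]; exact h2
    have hg2 : mg (eta u) y = 0 := by rw [mg_eq_dot_eta, ← dot_eta_comm, eta_eta]; exact h1
    rw [mg_add_left, mg_smul_left, mg_smul_left, hg1, hg2]; ring
  constructor
  · -- commuting implies the fixed-set equality
    intro hcomm
    have hcommx : ∀ x, ρ (β x) = β (ρ x) := by
      intro x
      have := LinearMap.ext_iff.mp hcomm x
      simpa using this
    have hβρu : β (ρ u) = lam • ρ u := by rw [← hcommx u, hβu, map_smul]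
    have hρu_eq : ρ u = (dot u (ρ u)) • u := hUNIQ (ρ u) hβρu
    set c : ℝ := dot u (ρ u) with hcdef
    have hρηu : ρ (eta u) = c • eta u := by
      rw [hρeta u, hρu_eq, map_smul]
    have hc1 : c = 1 := by
      have h3 : ρ (u + eta u) = c • (u + eta u) := by
        rw [map_add, hρu_eq, hρηu, smul_add]
      rw [he0span, map_smul, hρe0] at h3
      have h4 := congrFun h3 0
      have he00 : e0 0 = (1:ℝ) := by simp [e0]
      simp only [Pi.smul_apply, smul_eq_mul, he00] at h4
      have h2u : (2 : ℝ) * u 0 ≠ 0 := by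
        intro hc; apply hu0; linarith
      have h4' : 1 * (2 * u 0) = c * (2 * u 0) := by linarith
      exact (mul_right_cancel₀ h2u h4').symm
    rw [hc1, one_smul] at hρu_eq hρηu
    apply Set.ext
    intro x
    constructor
    · intro hxfix
      have hxfix' : ρ x = x := hxfix
      intro y hy
      set q : V4 := x - (dot u x) • u - (dot (eta u) x) • eta u with hqdef
      obtain ⟨hqu, hqηu⟩ := hq_orth x
      have hρq : ρ q = q := by
        rw [hqdef, map_sub, map_sub, map_smul, map_smul, hρu_eq, hρηu, hxfix']
      by_cases hqz : q = 0
      · have hxform : x = (dot u x) • u + (dot (eta u) x) • eta u := by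
          have := hxq x
          rw [← hqdef, hqz, add_zero] at this
          exact this
        rw [hxform]
        exact hSsub _ _ y hy
      · exfalso
        -- build an orthonormal triple fixed by ρ and conclude ρ = id
        have hdq_pos : 0 < dot q q := by
          rcases lt_or_eq_of_le (dot_self_nonneg q) with h | h
          · exact h
          · exact absurd (eq_zero_of_dot_self q h.symm) hqz
        set nq : ℝ := Real.sqrt (dot q q) with hnq
        have hnq_pos : 0 < nq := Real.sqrt_pos.mpr hdq_pos
        set q' : V4 := nq⁻¹ • q with hq'
        have hq'q' : dot q' q' = 1 := by
          rw [hq', dot_smul_left, dot_smul_right]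
          have : nq ^ 2 = dot q q := Real.sq_sqrt (le_of_lt hdq_pos)
          field_simp
          nlinarith [this]
        have hρq' : ρ q' = q' := by rw [hq', map_smul, hρq]
        have huq' : dot u q' = 0 := by rw [hq', dot_smul_right, hqu, mul_zero]
        have hηuq' : dot (eta u) q' = 0 := by rw [hq', dot_smul_right, hqηu, mul_zero]
        set g : Fin 3 → V4 := ![u, eta u, q'] with hg
        set f : Fin 3 → Eu := fun i => toE (g i) with hf
        have horth : Orthonormal ℝ f := by
          rw [orthonormal_iff_ite]
          intro i j
          rw [hf]
          simp only
          rw [inner_toE]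
          fin_cases i <;> fin_cases j <;>
            simp [hg, hu_unit, huηu, hηuu, hηuηu, hq'q', huq', hηuq',
              dot_comm q' u, dot_comm q' (eta u)]
        set Tρ : Eu →ₗ[ℝ] Eu := toE.toLinearMap ∘ₗ ρ ∘ₗ toE.symm.toLinearMap with hTρ
        have hTρ_apply : ∀ x : Eu, Tρ x = toE (ρ (toE.symm x)) := fun x => rfl
        have hdetT : LinearMap.det Tρ = 1 := by
          rw [hTρ]
          rw [LinearMap.det_conj ρ toE]
          exact hρdet
        have hdotT : ∀ x y : Eu, @inner ℝ Eu _ (Tρ x) (Tρ y) = @inner ℝ Eu _ x y := by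
          intro a b
          rw [hTρ_apply, hTρ_apply, inner_toE, inner_eq_dot']
          exact hρdot _ _
        have hfixT : ∀ i, Tρ (f i) = f i := by
          intro i
          rw [hf]
          simp only
          rw [hTρ_apply, toE.symm_apply_apply]
          fin_cases i
          · show toE (ρ (g 0)) = toE (g 0)
            rw [show g 0 = u from rfl, hρu_eq]
          · show toE (ρ (g 1)) = toE (g 1)
            rw [show g 1 = eta u from rfl, hρηu]
          · show toE (ρ (g 2)) = toE (g 2)
            rw [show g 2 = q' from rfl, hρq']
        have hTid : Tρ = LinearMap.id := fix_threeE Tρ hdetT hdotT f horth hfixT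
        apply hρ1
        apply LinearMap.ext
        intro w
        have := LinearMap.ext_iff.mp hTid (toE w)
        rw [hTρ_apply, toE.symm_apply_apply] at this
        simp only [LinearMap.id_apply] at this
        have := toE.injective this
        simpa using this
    · intro hx
      have hxform := hTsub x hx
      show ρ x = x
      conv_lhs => rw [hxform]
      rw [map_add, map_smul, map_smul, hρu_eq, hρηu]
      exact hxform.symm
  · -- fixed-set equality implies commuting
    intro hset
    have hu_fix : ρ u = u := by
      have hmem : u ∈ {x : V4 | ∀ y, β y = y → mg x y = 0} := by
        intro y hy
        have := hSsub 1 0 y hy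
        simpa using this
      rw [← hset] at hmem
      exact hmem
    have hηu_fix : ρ (eta u) = eta u := by rw [hρeta u, hu_fix]
    apply LinearMap.ext
    intro x
    simp only [LinearMap.comp_apply]
    set q : V4 := x - (dot u x) • u - (dot (eta u) x) • eta u with hqdef
    obtain ⟨hqu, hqηu⟩ := hq_orth x
    have hβq : β q = q := hKER q hqu hqηu
    have hρq_u : dot u (ρ q) = 0 := by
      conv_lhs => rw [← hu_fix]
      rw [hρdot, hqdef]
      exact hqu
    have hρq_ηu : dot (eta u) (ρ q) = 0 := by
      conv_lhs => rw [← hηu_fix]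
      rw [hρdot, hqdef]
      exact hqηu
    have hβρq : β (ρ q) = ρ q := hKER _ hρq_u hρq_ηu
    conv_lhs => rw [hxq x, ← hqdef]
    conv_rhs => rw [hxq x, ← hqdef]
    simp only [map_add, map_smul, hβu, hβηu, hβq, hu_fix, hηu_fix, hβρq]
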